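/- Let (X,T) be a topological dynamical system. If (X,T) is logarithmically mean equicontinuous, then for every x ∈ X the subsystem (cl(orb(x,T)), T), where cl(orb(x,T)) is the closure of the orbit {Tⁿx : n ≥ 0}, is uniquely ergodic. -/

import Mathlib

open Filter MeasureTheory Topology

/-- The `n`-th harmonic number `H_n = ∑_{k=1}^n 1/k` as a real number. -/
noncomputable def H (n : ℕ) : ℝ := ∑ k ∈ Finset.range n, (1 : ℝ) / (k + 1)

/-- A TDS `(X,T)` is logarithmically mean equicontinuous if for every `ε > 0` there is `δ > 0`
such that `d(x,y) < δ` implies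
`limsup_n (1/H_n) ∑_{k=1}^n (1/k) d(T^{k-1}x, T^{k-1}y) < ε`. -/
def LogMeanEquicontinuous {X : Type*} [MetricSpace X] (T : X → X) : Prop :=
  ∀ ε > (0 : ℝ), ∃ δ > (0 : ℝ), ∀ x y : X, dist x y < δ →
    limsup (fun n : ℕ =>
      (1 / H n) * ∑ k ∈ Finset.range n, (1 / (k + 1 : ℝ)) * dist (T^[k] x) (T^[k] y)) atTop < ε

/-- The orbit closure `cl {Tⁿx : n ≥ 0}` of a point `x`. -/
def orbitClosure {X : Type*} [TopologicalSpace X] (T : X → X) (x : X) : Set X :=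
  closure (Set.range fun n : ℕ => T^[n] x)

/-- The orbit closure is `T`-invariant, so `(cl(orb(x,T)), T)` is a subsystem. -/
theorem orbitClosure_mapsTo {X : Type*} [TopologicalSpace X] {T : X → X}
    (hT : Continuous T) (x : X) :
    Set.MapsTo T (orbitClosure T x) (orbitClosure T x) := by
  have h1 : Set.MapsTo T (Set.range fun n : ℕ => T^[n] x)
      (Set.range fun n : ℕ => T^[n] x) := by
    rintro _ ⟨n, rfl⟩
    exact ⟨n + 1, Function.iterate_succ_apply' T n x⟩
  rw [Set.mapsTo_iff_image_subset]
  calc T '' orbitClosure T x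
      ⊆ closure (T '' Set.range fun n : ℕ => T^[n] x) :=
        image_closure_subset_closure_image hT
    _ ⊆ orbitClosure T x := closure_mono (Set.mapsTo_iff_image_subset.mp h1)

namespace LMEProof


/-- logarithmic average of a sequence -/
noncomputable def avg (a : ℕ → ℝ) (n : ℕ) : ℝ :=
  (1 / H n) * ∑ k ∈ Finset.range n, (1 / (k + 1 : ℝ)) * a k

lemma H_nonneg (n : ℕ) : 0 ≤ H n :=
  Finset.sum_nonneg fun k _ => by positivity

lemma one_le_H {n : ℕ} (hn : 1 ≤ n) : 1 ≤ H n := by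
  have : H 1 ≤ H n := by
    apply Finset.sum_le_sum_of_subset_of_nonneg
    · exact Finset.range_subset_range.mpr hn
    · intro k _ _; positivity
  simpa [H] using this

lemma H_pos {n : ℕ} (hn : 1 ≤ n) : 0 < H n := lt_of_lt_of_le one_pos (one_le_H hn)

lemma H_tendsto : Tendsto H atTop atTop := by
  have h := Real.tendsto_sum_range_one_div_nat_succ_atTop
  exact h.congr fun n => rfl

lemma avg_zero (a : ℕ → ℝ) : avg a 0 = 0 := by simp [avg]

lemma sum_w (n : ℕ) : ∑ k ∈ Finset.range n, (1 / (k + 1 : ℝ)) = H n := rfl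

lemma avg_nonneg {a : ℕ → ℝ} (ha : ∀ k, 0 ≤ a k) (n : ℕ) : 0 ≤ avg a n := by
  apply mul_nonneg
  · have := H_nonneg n; positivity
  · exact Finset.sum_nonneg fun k _ => mul_nonneg (by positivity) (ha k)

lemma avg_le_of_le {a : ℕ → ℝ} {M : ℝ} (hM : 0 ≤ M) (ha : ∀ k, a k ≤ M) (n : ℕ) :
    avg a n ≤ M := by
  rcases Nat.eq_zero_or_pos n with h | h
  · simp [h, avg_zero, hM]
  · have hH : 0 < H n := H_pos h
    have h1 : ∑ k ∈ Finset.range n, (1 / (k + 1 : ℝ)) * a k ≤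
        ∑ k ∈ Finset.range n, (1 / (k + 1 : ℝ)) * M := by
      apply Finset.sum_le_sum
      intro k _
      exact mul_le_mul_of_nonneg_left (ha k) (by positivity)
    have h2 : ∑ k ∈ Finset.range n, (1 / (k + 1 : ℝ)) * M = H n * M := by
      rw [← Finset.sum_mul, sum_w]
    calc avg a n ≤ (1 / H n) * (H n * M) := by
          apply mul_le_mul_of_nonneg_left _ (by positivity)
          rw [← h2]; exact h1
      _ = M := by field_simp
lemma abs_avg_le_of_abs_le {a : ℕ → ℝ} {M : ℝ} (hM : 0 ≤ M) (ha : ∀ k, |a k| ≤ M) (n : ℕ) :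
    |avg a n| ≤ M := by
  have h1 : |avg a n| ≤ avg (fun k => |a k|) n := by
    rw [avg, abs_mul, abs_of_nonneg (show (0:ℝ) ≤ 1 / H n by have := H_nonneg n; positivity)]
    apply mul_le_mul_of_nonneg_left _ (by have := H_nonneg n; positivity)
    refine (Finset.abs_sum_le_sum_abs _ _).trans ?_
    apply Finset.sum_le_sum
    intro k _
    rw [abs_mul, abs_of_nonneg (show (0:ℝ) ≤ 1 / (k+1:ℝ) by positivity)]
  exact h1.trans (avg_le_of_le hM ha n)

lemma avg_sub (a b : ℕ → ℝ) (n : ℕ) : avg a n - avg b n = avg (fun k => a k - b k) n := by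
  rw [avg, avg, avg, ← mul_sub, ← Finset.sum_sub_distrib]
  congr 1
  exact Finset.sum_congr rfl fun k _ => by ring

lemma avg_add (a b : ℕ → ℝ) (n : ℕ) : avg (fun k => a k + b k) n = avg a n + avg b n := by
  rw [avg, avg, avg, ← mul_add, ← Finset.sum_add_distrib]
  congr 1
  exact Finset.sum_congr rfl fun k _ => by ring

lemma avg_smul (c : ℝ) (a : ℕ → ℝ) (n : ℕ) : avg (fun k => c * a k) n = c * avg a n := by
  simp only [avg, Finset.mul_sum]
  exact Finset.sum_congr rfl fun k _ => by ring

lemma avg_one {n : ℕ} (hn : 1 ≤ n) : avg (fun _ => 1) n = 1 := by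
  rw [avg]
  simp only [mul_one, sum_w]
  field_simp [ (H_pos hn).ne' ]

lemma avg_le_add_const {a b : ℕ → ℝ} {c : ℝ} (hc : 0 ≤ c)
    (hab : ∀ k, a k ≤ c + b k) (hb : ∀ k, 0 ≤ b k) (n : ℕ) :
    avg a n ≤ c + avg b n := by
  rcases Nat.eq_zero_or_pos n with h | h
  · simp [h, avg_zero]
    positivity
  · have h1 : avg a n ≤ avg (fun k => c + b k) n := by
      rw [avg, avg]
      apply mul_le_mul_of_nonneg_left _ (by have := H_nonneg n; positivity)
      exact Finset.sum_le_sum fun k _ => mul_le_mul_of_nonneg_left (hab k) (by positivity)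
    have h2 : avg (fun k => c + b k) n = c + avg b n := by
      have := avg_add (fun _ => c) b n
      have hc' : avg (fun _ => c) n = c := by
        have := avg_smul c (fun _ => 1) n
        simpa [avg_one h] using this
      simpa [hc'] using this
    rw [h2] at h1; exact h1

lemma avg_shift_bound {a : ℕ → ℝ} {M : ℝ} (hM : 0 ≤ M) (ha : ∀ k, |a k| ≤ M) (n : ℕ) :
    |avg (fun k => a (k + 1)) n - avg a n| ≤ 3 * M / H n := by
  set w : ℕ → ℝ := fun k => 1 / (k + 1 : ℝ) with hw
  have hwnn : ∀ k, 0 ≤ w k := fun k => by positivity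
  have hwmono : ∀ k : ℕ, w (k+1) ≤ w k := by
    intro k
    apply one_div_le_one_div_of_le (by positivity)
    push_cast; linarith
  -- key identity
  have hiden : ∑ k ∈ Finset.range n, w k * a (k+1) - ∑ k ∈ Finset.range n, w k * a k
      = (∑ k ∈ Finset.range n, (w k - w (k+1)) * a (k+1)) + w n * a n - a 0 := by
    have h1 : ∑ k ∈ Finset.range (n+1), w k * a k
        = (∑ k ∈ Finset.range n, w (k+1) * a (k+1)) + w 0 * a 0 :=
      Finset.sum_range_succ' (fun j => w j * a j) n
    have h2 : ∑ k ∈ Finset.range (n+1), w k * a k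
        = (∑ k ∈ Finset.range n, w k * a k) + w n * a n :=
      Finset.sum_range_succ (fun j => w j * a j) n
    have h3 : ∑ k ∈ Finset.range n, w k * a (k+1)
        = (∑ k ∈ Finset.range n, (w k - w (k+1)) * a (k+1))
          + ∑ k ∈ Finset.range n, w (k+1) * a (k+1) := by
      rw [← Finset.sum_add_distrib]
      exact Finset.sum_congr rfl fun k _ => by ring
    have hw0 : w 0 = 1 := by norm_num [hw]
    rw [h3]
    have h4 : ∑ k ∈ Finset.range n, w (k+1) * a (k+1)
        = (∑ k ∈ Finset.range n, w k * a k) + w n * a n - w 0 * a 0 := by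
      rw [← h2, h1]; ring
    rw [h4, hw0]; ring
  -- bound the three pieces
  have hb1 : |∑ k ∈ Finset.range n, (w k - w (k+1)) * a (k+1)| ≤ M := by
    refine (Finset.abs_sum_le_sum_abs _ _).trans ?_
    have : ∀ k ∈ Finset.range n, |(w k - w (k+1)) * a (k+1)| ≤ (w k - w (k+1)) * M := by
      intro k _
      rw [abs_mul, abs_of_nonneg (sub_nonneg.mpr (hwmono k))]
      exact mul_le_mul_of_nonneg_left (ha (k+1)) (sub_nonneg.mpr (hwmono k))
    refine (Finset.sum_le_sum this).trans ?_
    rw [← Finset.sum_mul]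
    have htel : ∑ k ∈ Finset.range n, (w k - w (k+1)) = w 0 - w n := by
      exact Finset.sum_range_sub' w n
    rw [htel]
    have hw0 : w 0 = 1 := by norm_num [hw]
    have : w 0 - w n ≤ 1 := by rw [hw0]; linarith [hwnn n]
    nlinarith
  have hb2 : |w n * a n| ≤ M := by
    rw [abs_mul, abs_of_nonneg (hwnn n)]
    have hwle : w n ≤ 1 := by
      simp only [hw]
      rw [div_le_one (by positivity)]
      push_cast; linarith
    calc w n * |a n| ≤ 1 * M := mul_le_mul hwle (ha n) (abs_nonneg _) zero_le_one
      _ = M := one_mul M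
  have hcore : |∑ k ∈ Finset.range n, w k * a (k+1) - ∑ k ∈ Finset.range n, w k * a k|
      ≤ 3 * M := by
    rw [hiden]
    have := ha 0
    calc |∑ k ∈ Finset.range n, (w k - w (k+1)) * a (k+1) + w n * a n - a 0|
        ≤ |∑ k ∈ Finset.range n, (w k - w (k+1)) * a (k+1)| + |w n * a n| + |a 0| := by
          exact (abs_sub _ _).trans (by gcongr; exact abs_add_le _ _)
      _ ≤ M + M + M := by gcongr
      _ = 3 * M := by ring
  have hHnn := H_nonneg n
  rw [avg, avg, ← mul_sub, abs_mul,
    abs_of_nonneg (show (0:ℝ) ≤ 1 / H n by positivity)]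
  calc (1 / H n) * |∑ k ∈ Finset.range n, w k * a (k+1) - ∑ k ∈ Finset.range n, w k * a k|
      ≤ (1 / H n) * (3 * M) := mul_le_mul_of_nonneg_left hcore (by positivity)
    _ = 3 * M / H n := by ring

section Ell

variable {Y : Type*} [MetricSpace Y] [CompactSpace Y]
variable (S : Y → Y) (x₀ : Y) (𝒰 : Ultrafilter ℕ)

/-- Logarithmic Birkhoff averages of `g` along the orbit of `x₀`. -/
noncomputable def uSeq (g : C(Y, ℝ)) : ℕ → ℝ :=
  fun n => avg (fun k => g (S^[k] x₀)) n

lemma abs_uSeq_le (g : C(Y, ℝ)) (n : ℕ) : |uSeq S x₀ g n| ≤ ‖g‖ :=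
  abs_avg_le_of_abs_le (norm_nonneg g) (fun k => by
    simpa [Real.norm_eq_abs] using g.norm_coe_le_norm (S^[k] x₀)) n

/-- The value of the invariant functional on `g`. -/
noncomputable def ell (g : C(Y, ℝ)) : ℝ := limUnder (𝒰 : Filter ℕ) (uSeq S x₀ g)

lemma tendsto_uSeq_ell (g : C(Y, ℝ)) :
    Tendsto (uSeq S x₀ g) (𝒰 : Filter ℕ) (𝓝 (ell S x₀ 𝒰 g)) := by
  have hmem : ∀ n, uSeq S x₀ g n ∈ Set.Icc (-‖g‖) ‖g‖ := by
    intro n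
    exact abs_le.mp (abs_uSeq_le S x₀ g n)
  have hle : (𝒰.map (uSeq S x₀ g) : Filter ℝ) ≤ Filter.principal (Set.Icc (-‖g‖) ‖g‖) := by
    rw [Filter.le_principal_iff]
    exact Filter.mem_map.mpr (Filter.univ_mem' hmem)
  obtain ⟨a, -, ha⟩ := isCompact_Icc.ultrafilter_le_nhds (𝒰.map (uSeq S x₀ g)) hle
  have hT : Tendsto (uSeq S x₀ g) (𝒰 : Filter ℕ) (𝓝 a) := ha
  rwa [ell, hT.limUnder_eq]

lemma ell_nonneg {g : C(Y, ℝ)} (hg : ∀ y, 0 ≤ g y) : 0 ≤ ell S x₀ 𝒰 g :=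
  ge_of_tendsto (tendsto_uSeq_ell S x₀ 𝒰 g)
    (Filter.Eventually.of_forall fun n => avg_nonneg (fun k => hg _) n)

lemma ell_mono {g h : C(Y, ℝ)} (hgh : ∀ y, g y ≤ h y) : ell S x₀ 𝒰 g ≤ ell S x₀ 𝒰 h := by
  refine le_of_tendsto_of_tendsto' (tendsto_uSeq_ell S x₀ 𝒰 g) (tendsto_uSeq_ell S x₀ 𝒰 h) ?_
  intro n
  have := avg_sub (fun k => h (S^[k] x₀)) (fun k => g (S^[k] x₀)) n
  have hnn : 0 ≤ avg (fun k => h (S^[k] x₀) - g (S^[k] x₀)) n :=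
    avg_nonneg (fun k => sub_nonneg.mpr (hgh _)) n
  have : 0 ≤ uSeq S x₀ h n - uSeq S x₀ g n := by
    rw [uSeq, uSeq, this]; exact hnn
  linarith

lemma ell_add (g h : C(Y, ℝ)) :
    ell S x₀ 𝒰 (g + h) = ell S x₀ 𝒰 g + ell S x₀ 𝒰 h := by
  have h1 : Tendsto (uSeq S x₀ (g + h)) (𝒰 : Filter ℕ)
      (𝓝 (ell S x₀ 𝒰 g + ell S x₀ 𝒰 h)) := by
    have := (tendsto_uSeq_ell S x₀ 𝒰 g).add (tendsto_uSeq_ell S x₀ 𝒰 h)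
    refine this.congr fun n => ?_
    rw [uSeq, uSeq, uSeq, ← avg_add]
    rfl
  exact tendsto_nhds_unique (tendsto_uSeq_ell S x₀ 𝒰 (g + h)) h1

lemma ell_smul (c : ℝ) (g : C(Y, ℝ)) : ell S x₀ 𝒰 (c • g) = c * ell S x₀ 𝒰 g := by
  have h1 : Tendsto (uSeq S x₀ (c • g)) (𝒰 : Filter ℕ) (𝓝 (c * ell S x₀ 𝒰 g)) := by
    have := (tendsto_uSeq_ell S x₀ 𝒰 g).const_mul c
    refine this.congr fun n => ?_
    rw [uSeq, uSeq, ← avg_smul]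
    rfl
  exact tendsto_nhds_unique (tendsto_uSeq_ell S x₀ 𝒰 (c • g)) h1

variable {𝒰}

lemma ell_one (h𝒰 : (𝒰 : Filter ℕ) ≤ atTop) : ell S x₀ 𝒰 (1 : C(Y, ℝ)) = 1 := by
  have h1 : Tendsto (uSeq S x₀ (1 : C(Y, ℝ))) (𝒰 : Filter ℕ) (𝓝 1) := by
    apply Tendsto.congr' _ tendsto_const_nhds
    have : ∀ᶠ n in (𝒰 : Filter ℕ), 1 ≤ n := h𝒰 (eventually_ge_atTop 1)
    filter_upwards [this] with n hn
    exact (avg_one hn).symm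
  exact tendsto_nhds_unique (tendsto_uSeq_ell S x₀ 𝒰 (1 : C(Y, ℝ))) h1

lemma ell_comp (h𝒰 : (𝒰 : Filter ℕ) ≤ atTop) (hS : Continuous S) (g : C(Y, ℝ)) :
    ell S x₀ 𝒰 (g.comp ⟨S, hS⟩) = ell S x₀ 𝒰 g := by
  have hdiff : Tendsto (fun n => uSeq S x₀ (g.comp ⟨S, hS⟩) n - uSeq S x₀ g n)
      atTop (𝓝 0) := by
    refine squeeze_zero_norm (fun n => ?_) (tendsto_const_nhds.div_atTop H_tendsto (g := H) (a := 3 * ‖g‖))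
    ·
      have hb : ∀ k, |g (S^[k] x₀)| ≤ ‖g‖ := fun k => by
        simpa [Real.norm_eq_abs] using g.norm_coe_le_norm (S^[k] x₀)
      have h1 : uSeq S x₀ (g.comp ⟨S, hS⟩) n
          = avg (fun k => g (S^[k+1] x₀)) n := by
        rw [uSeq]
        congr 1
        funext k
        simp [Function.iterate_succ_apply']
      rw [Real.norm_eq_abs, h1, uSeq]
      exact avg_shift_bound (norm_nonneg g) hb n
  have h1 : Tendsto (uSeq S x₀ (g.comp ⟨S, hS⟩)) (𝒰 : Filter ℕ) (𝓝 (ell S x₀ 𝒰 g)) := by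
    have h2 : Tendsto (fun n => uSeq S x₀ g n +
        (uSeq S x₀ (g.comp ⟨S, hS⟩) n - uSeq S x₀ g n)) (𝒰 : Filter ℕ)
        (𝓝 (ell S x₀ 𝒰 g + 0)) :=
      (tendsto_uSeq_ell S x₀ 𝒰 g).add ((hdiff.mono_left h𝒰))
    simpa using h2
  exact tendsto_nhds_unique (tendsto_uSeq_ell S x₀ 𝒰 (g.comp ⟨S, hS⟩)) h1

end Ell

section ContentSec

variable {Y : Type*} [MetricSpace Y] [CompactSpace Y]
variable (S : Y → Y) (x₀ : Y) (𝒰 : Ultrafilter ℕ)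

/-- Test functions for a set `K`: nonnegative continuous functions that are `≥ 1` on `K`. -/
def testSet (K : Set Y) : Set C(Y, ℝ) :=
  {g | (∀ y, 0 ≤ g y) ∧ ∀ y ∈ K, 1 ≤ g y}

lemma one_mem_testSet (K : Set Y) : (1 : C(Y, ℝ)) ∈ testSet K :=
  ⟨fun _ => zero_le_one, fun _ _ => le_refl 1⟩

/-- The Riesz-type content associated to `ell`. -/
noncomputable def rc (K : Set Y) : ℝ := sInf (ell S x₀ 𝒰 '' testSet K)

lemma rc_image_nonempty (K : Set Y) : (ell S x₀ 𝒰 '' testSet K).Nonempty :=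
  ⟨_, ⟨1, one_mem_testSet K, rfl⟩⟩

lemma rc_bddBelow (K : Set Y) : BddBelow (ell S x₀ 𝒰 '' testSet K) := by
  refine ⟨0, ?_⟩
  rintro _ ⟨g, hg, rfl⟩
  exact ell_nonneg S x₀ 𝒰 hg.1

lemma rc_nonneg (K : Set Y) : 0 ≤ rc S x₀ 𝒰 K := by
  apply le_csInf (rc_image_nonempty S x₀ 𝒰 K)
  rintro _ ⟨g, hg, rfl⟩
  exact ell_nonneg S x₀ 𝒰 hg.1

lemma rc_le_ell {K : Set Y} {g : C(Y, ℝ)} (hg : g ∈ testSet K) :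
    rc S x₀ 𝒰 K ≤ ell S x₀ 𝒰 g :=
  csInf_le (rc_bddBelow S x₀ 𝒰 K) ⟨g, hg, rfl⟩

lemma rc_mono {K L : Set Y} (h : K ⊆ L) : rc S x₀ 𝒰 K ≤ rc S x₀ 𝒰 L := by
  apply csInf_le_csInf (rc_bddBelow S x₀ 𝒰 K) (rc_image_nonempty S x₀ 𝒰 L)
  apply Set.image_mono
  rintro g ⟨h1, h2⟩
  exact ⟨h1, fun y hy => h2 y (h hy)⟩

lemma exists_test_lt {K : Set Y} {ε : ℝ} (hε : 0 < ε) :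
    ∃ g ∈ testSet K, ell S x₀ 𝒰 g < rc S x₀ 𝒰 K + ε := by
  obtain ⟨a, ⟨g, hg, rfl⟩, ha⟩ :=
    exists_lt_of_csInf_lt (rc_image_nonempty S x₀ 𝒰 K)
      (lt_add_of_pos_right (rc S x₀ 𝒰 K) hε)
  exact ⟨g, hg, ha⟩

variable {𝒰} {S}

lemma rc_univ_eq_one (h𝒰 : (𝒰 : Filter ℕ) ≤ atTop) : rc S x₀ 𝒰 (Set.univ : Set Y) = 1 := by
  apply le_antisymm
  · have := rc_le_ell S x₀ 𝒰 (one_mem_testSet (Set.univ : Set Y))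
    rwa [ell_one S x₀ h𝒰] at this
  · apply le_csInf (rc_image_nonempty S x₀ 𝒰 _)
    rintro _ ⟨g, hg, rfl⟩
    have : ell S x₀ 𝒰 (1 : C(Y, ℝ)) ≤ ell S x₀ 𝒰 g :=
      ell_mono S x₀ 𝒰 fun y => hg.2 y (Set.mem_univ y)
    rwa [ell_one S x₀ h𝒰] at this

/-- The content built from `ell`. -/
noncomputable def lmeContent (h𝒰 : (𝒰 : Filter ℕ) ≤ atTop) : MeasureTheory.Content Y where
  toFun K := (rc S x₀ 𝒰 (K : Set Y)).toNNReal
  mono' K₁ K₂ h := Real.toNNReal_mono (rc_mono S x₀ 𝒰 h)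
  sup_le' K₁ K₂ := by
    have key : rc S x₀ 𝒰 ((K₁ : Set Y) ∪ (K₂ : Set Y))
        ≤ rc S x₀ 𝒰 K₁ + rc S x₀ 𝒰 K₂ := by
      apply le_of_forall_pos_le_add
      intro ε hε
      obtain ⟨g₁, hg₁, hlt₁⟩ := exists_test_lt S x₀ 𝒰 (K := (K₁ : Set Y)) (half_pos hε)
      obtain ⟨g₂, hg₂, hlt₂⟩ := exists_test_lt S x₀ 𝒰 (K := (K₂ : Set Y)) (half_pos hε)
      have hmem : g₁ + g₂ ∈ testSet ((K₁ : Set Y) ∪ (K₂ : Set Y)) := by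
        constructor
        · intro y
          have := hg₁.1 y; have := hg₂.1 y
          simp only [ContinuousMap.add_apply]; linarith
        · rintro y (hy | hy)
          · have := hg₁.2 y hy; have := hg₂.1 y
            simp only [ContinuousMap.add_apply]; linarith
          · have := hg₂.2 y hy; have := hg₁.1 y
            simp only [ContinuousMap.add_apply]; linarith
      calc rc S x₀ 𝒰 ((K₁ : Set Y) ∪ (K₂ : Set Y)) ≤ ell S x₀ 𝒰 (g₁ + g₂) :=
            rc_le_ell S x₀ 𝒰 hmem
        _ = ell S x₀ 𝒰 g₁ + ell S x₀ 𝒰 g₂ := ell_add S x₀ 𝒰 g₁ g₂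
        _ ≤ rc S x₀ 𝒰 K₁ + ε / 2 + (rc S x₀ 𝒰 K₂ + ε / 2) := by
            have := le_of_lt hlt₁; have := le_of_lt hlt₂; linarith
        _ = rc S x₀ 𝒰 K₁ + rc S x₀ 𝒰 K₂ + ε := by ring
    calc (rc S x₀ 𝒰 ((K₁ ⊔ K₂ : TopologicalSpace.Compacts Y) : Set Y)).toNNReal
        ≤ (rc S x₀ 𝒰 K₁ + rc S x₀ 𝒰 K₂).toNNReal := by
          apply Real.toNNReal_mono
          exact key
      _ = (rc S x₀ 𝒰 K₁).toNNReal + (rc S x₀ 𝒰 K₂).toNNReal :=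
          Real.toNNReal_add (rc_nonneg S x₀ 𝒰 _) (rc_nonneg S x₀ 𝒰 _)
  sup_disjoint' K₁ K₂ hdisj hc₁ hc₂ := by
    have hge : rc S x₀ 𝒰 K₁ + rc S x₀ 𝒰 K₂
        ≤ rc S x₀ 𝒰 ((K₁ : Set Y) ∪ (K₂ : Set Y)) := by
      apply le_csInf (rc_image_nonempty S x₀ 𝒰 _)
      rintro _ ⟨f, hf, rfl⟩
      obtain ⟨φ, hφ0, hφ1, hφmem⟩ := exists_continuous_zero_one_of_isClosed hc₁ hc₂ hdisj
      set g₁ : C(Y, ℝ) := f * ((1 : C(Y, ℝ)) - φ) with hg₁def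
      set g₂ : C(Y, ℝ) := f * φ with hg₂def
      have hg₁ : g₁ ∈ testSet (K₁ : Set Y) := by
        constructor
        · intro y
          have h1 := hf.1 y
          have h2 := (hφmem y).2
          simp only [hg₁def, ContinuousMap.mul_apply, ContinuousMap.sub_apply,
            ContinuousMap.one_apply]
          nlinarith
        · intro y hy
          have h1 := hf.2 y (Or.inl hy)
          have h2 : φ y = 0 := hφ0 hy
          simp only [hg₁def, ContinuousMap.mul_apply, ContinuousMap.sub_apply,
            ContinuousMap.one_apply, h2]
          linarith
      have hg₂ : g₂ ∈ testSet (K₂ : Set Y) := by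
        constructor
        · intro y
          have h1 := hf.1 y
          have h2 := (hφmem y).1
          simp only [hg₂def, ContinuousMap.mul_apply]
          nlinarith
        · intro y hy
          have h1 := hf.2 y (Or.inr hy)
          have h2 : φ y = 1 := hφ1 hy
          simp only [hg₂def, ContinuousMap.mul_apply, h2]
          linarith
      have hsum : g₁ + g₂ = f := by
        ext y
        simp only [ContinuousMap.add_apply, hg₁def, hg₂def, ContinuousMap.mul_apply,
          ContinuousMap.sub_apply, ContinuousMap.one_apply]
        ring
      calc rc S x₀ 𝒰 K₁ + rc S x₀ 𝒰 K₂ ≤ ell S x₀ 𝒰 g₁ + ell S x₀ 𝒰 g₂ :=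
            add_le_add (rc_le_ell S x₀ 𝒰 hg₁) (rc_le_ell S x₀ 𝒰 hg₂)
        _ = ell S x₀ 𝒰 (g₁ + g₂) := (ell_add S x₀ 𝒰 g₁ g₂).symm
        _ = ell S x₀ 𝒰 f := by rw [hsum]
    have hle : rc S x₀ 𝒰 ((K₁ : Set Y) ∪ (K₂ : Set Y))
        ≤ rc S x₀ 𝒰 K₁ + rc S x₀ 𝒰 K₂ := by
      apply le_of_forall_pos_le_add
      intro ε hε
      obtain ⟨g₁, hg₁, hlt₁⟩ := exists_test_lt S x₀ 𝒰 (K := (K₁ : Set Y)) (half_pos hε)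
      obtain ⟨g₂, hg₂, hlt₂⟩ := exists_test_lt S x₀ 𝒰 (K := (K₂ : Set Y)) (half_pos hε)
      have hmem : g₁ + g₂ ∈ testSet ((K₁ : Set Y) ∪ (K₂ : Set Y)) := by
        constructor
        · intro y
          have := hg₁.1 y; have := hg₂.1 y
          simp only [ContinuousMap.add_apply]; linarith
        · rintro y (hy | hy)
          · have := hg₁.2 y hy; have := hg₂.1 y
            simp only [ContinuousMap.add_apply]; linarith
          · have := hg₂.2 y hy; have := hg₁.1 y
            simp only [ContinuousMap.add_apply]; linarith
      calc rc S x₀ 𝒰 ((K₁ : Set Y) ∪ (K₂ : Set Y)) ≤ ell S x₀ 𝒰 (g₁ + g₂) :=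
            rc_le_ell S x₀ 𝒰 hmem
        _ = ell S x₀ 𝒰 g₁ + ell S x₀ 𝒰 g₂ := ell_add S x₀ 𝒰 g₁ g₂
        _ ≤ rc S x₀ 𝒰 K₁ + ε / 2 + (rc S x₀ 𝒰 K₂ + ε / 2) := by
            have := le_of_lt hlt₁; have := le_of_lt hlt₂; linarith
        _ = rc S x₀ 𝒰 K₁ + rc S x₀ 𝒰 K₂ + ε := by ring
    have heq : rc S x₀ 𝒰 ((K₁ ⊔ K₂ : TopologicalSpace.Compacts Y) : Set Y)
        = rc S x₀ 𝒰 K₁ + rc S x₀ 𝒰 K₂ := le_antisymm hle hge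
    rw [heq, Real.toNNReal_add (rc_nonneg S x₀ 𝒰 _) (rc_nonneg S x₀ 𝒰 _)]

end ContentSec

section MeasSec

open TopologicalSpace MeasureTheory

variable {Y : Type*} [MetricSpace Y] [CompactSpace Y]
  [MeasurableSpace Y] [BorelSpace Y]
variable {S : Y → Y} (x₀ : Y) {𝒰 : Ultrafilter ℕ}

lemma lmeContent_univ (h𝒰 : (𝒰 : Filter ℕ) ≤ atTop) :
    (lmeContent (S := S) x₀ h𝒰).measure (Set.univ : Set Y) = 1 := by
  rw [Content.measure_apply _ MeasurableSet.univ,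
    Content.outerMeasure_of_isOpen _ _ isOpen_univ,
    Content.innerContent_of_isCompact _ isCompact_univ isOpen_univ]
  have : (lmeContent (S := S) x₀ h𝒰) ⟨Set.univ, isCompact_univ⟩
      = (rc S x₀ 𝒰 (Set.univ : Set Y)).toNNReal := rfl
  rw [this, rc_univ_eq_one x₀ h𝒰]
  norm_num

lemma lmeMeasure_preimage_compact_le (h𝒰 : (𝒰 : Filter ℕ) ≤ atTop) (hS : Continuous S)
    (K : Compacts Y) :
    (lmeContent (S := S) x₀ h𝒰).measure (S ⁻¹' (K : Set Y))
      ≤ (lmeContent (S := S) x₀ h𝒰).measure (K : Set Y) := by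
  set μC := lmeContent (S := S) x₀ h𝒰 with hμC
  have hstep : μC.measure (S ⁻¹' (K : Set Y)) ≤ ENNReal.ofReal (rc S x₀ 𝒰 (K : Set Y)) := by
    apply ENNReal.le_of_forall_pos_le_add
    intro ε hε _
    have hε' : (0 : ℝ) < ε := by exact_mod_cast hε
    have hpos : (0 : ℝ) < rc S x₀ 𝒰 (K : Set Y) + ε :=
      add_pos_of_nonneg_of_pos (rc_nonneg S x₀ 𝒰 _) hε'
    obtain ⟨f, hf, hflt⟩ := exists_test_lt S x₀ 𝒰 (K := (K : Set Y)) hε'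
    set c : ℝ := max (1 / 2) (ell S x₀ 𝒰 f / (rc S x₀ 𝒰 (K : Set Y) + ε)) with hcdef
    have hc0 : (0 : ℝ) < c := lt_of_lt_of_le one_half_pos (le_max_left _ _)
    have hc1 : c < 1 := by
      apply max_lt (by norm_num)
      rw [div_lt_one hpos]
      exact hflt
    have hcge : ell S x₀ 𝒰 f / (rc S x₀ 𝒰 (K : Set Y) + ε) ≤ c := le_max_right _ _
    have hellle : ell S x₀ 𝒰 f ≤ c * (rc S x₀ 𝒰 (K : Set Y) + ε) :=
      (div_le_iff₀ hpos).mp hcge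
    set U : Set Y := {y | c < f (S y)} with hUdef
    have hUopen : IsOpen U := isOpen_lt continuous_const (f.continuous.comp hS)
    have hsub : S ⁻¹' (K : Set Y) ⊆ U := by
      intro y hy
      have : 1 ≤ f (S y) := hf.2 _ hy
      exact lt_of_lt_of_le hc1 this
    calc μC.measure (S ⁻¹' (K : Set Y)) ≤ μC.measure U := measure_mono hsub
      _ = μC.outerMeasure U := Content.measure_apply _ hUopen.measurableSet
      _ = μC.innerContent ⟨U, hUopen⟩ := Content.outerMeasure_of_isOpen _ _ hUopen
      _ ≤ ENNReal.ofReal (rc S x₀ 𝒰 (K : Set Y) + ε) := by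
          apply iSup₂_le
          intro K' hK'
          -- the test function for K'
          set g : C(Y, ℝ) := (1 / c) • (f.comp ⟨S, hS⟩) with hgdef
          have hgmem : g ∈ testSet (K' : Set Y) := by
            constructor
            · intro y
              have := hf.1 (S y)
              simp only [hgdef, ContinuousMap.smul_apply, ContinuousMap.comp_apply,
                ContinuousMap.coe_mk, smul_eq_mul]
              positivity
            · intro y hy
              have hcy : c < f (S y) := hK' hy
              simp only [hgdef, ContinuousMap.smul_apply, ContinuousMap.comp_apply,
                ContinuousMap.coe_mk, smul_eq_mul]
              rw [one_div, inv_mul_eq_div, le_div_iff₀ hc0, one_mul]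
              exact le_of_lt hcy
          have hrc : rc S x₀ 𝒰 (K' : Set Y) ≤ rc S x₀ 𝒰 (K : Set Y) + ε := by
            calc rc S x₀ 𝒰 (K' : Set Y) ≤ ell S x₀ 𝒰 g := rc_le_ell S x₀ 𝒰 hgmem
              _ = (1 / c) * ell S x₀ 𝒰 (f.comp ⟨S, hS⟩) := ell_smul S x₀ 𝒰 _ _
              _ = (1 / c) * ell S x₀ 𝒰 f := by rw [ell_comp S x₀ h𝒰 hS]
              _ ≤ rc S x₀ 𝒰 (K : Set Y) + ε := by
                  rw [one_div, inv_mul_eq_div, div_le_iff₀ hc0]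
                  linarith [hellle]
          show ((μC.toFun K' : NNReal) : ENNReal) ≤ ENNReal.ofReal (rc S x₀ 𝒰 (K : Set Y) + ε)
          have h1 : μC.toFun K' = (rc S x₀ 𝒰 (K' : Set Y)).toNNReal := rfl
          rw [h1, ENNReal.ofReal]
          exact_mod_cast Real.toNNReal_mono hrc
      _ ≤ ENNReal.ofReal (rc S x₀ 𝒰 (K : Set Y)) + ε := by
          rw [ENNReal.ofReal_add (rc_nonneg S x₀ 𝒰 _) (le_of_lt hε'),
            ENNReal.ofReal_coe_nnreal]
  have hlow : (ENNReal.ofReal (rc S x₀ 𝒰 (K : Set Y)))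
      ≤ μC.measure (K : Set Y) := by
    rw [Content.measure_apply _ K.isCompact.isClosed.measurableSet]
    have h1 : ((μC.toFun K : NNReal) : ENNReal) ≤ μC.outerMeasure K :=
      Content.le_outerMeasure_compacts _ _
    have h2 : ((μC.toFun K : NNReal) : ENNReal) = ENNReal.ofReal (rc S x₀ 𝒰 (K : Set Y)) := by
      have h3 : μC.toFun K = (rc S x₀ 𝒰 (K : Set Y)).toNNReal := rfl
      rw [h3, ENNReal.ofReal]
    rwa [h2] at h1
  exact hstep.trans hlow

lemma lmeMeasure_map (h𝒰 : (𝒰 : Filter ℕ) ≤ atTop) (hS : Continuous S) :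
    Measure.map S ((lmeContent (S := S) x₀ h𝒰).measure)
      = (lmeContent (S := S) x₀ h𝒰).measure := by
  set m := (lmeContent (S := S) x₀ h𝒰).measure with hm
  haveI hprob : IsProbabilityMeasure m := ⟨lmeContent_univ x₀ h𝒰⟩
  have hSm : Measurable S := hS.measurable
  haveI : IsProbabilityMeasure (Measure.map S m) :=
    Measure.isProbabilityMeasure_map hSm.aemeasurable
  have key : ∀ B : Set Y, MeasurableSet B → Measure.map S m B ≤ m B := by
    intro B hB
    by_contra hlt
    push_neg at hlt
    obtain ⟨K, hKB, hKcomp, hK⟩ := hB.exists_lt_isCompact hlt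
    have h1 : Measure.map S m K = m (S ⁻¹' K) :=
      Measure.map_apply hSm hKcomp.isClosed.measurableSet
    have h2 : m (S ⁻¹' K) ≤ m K := lmeMeasure_preimage_compact_le x₀ h𝒰 hS ⟨K, hKcomp⟩
    have h3 : m K ≤ m B := measure_mono hKB
    rw [h1] at hK
    exact absurd (hK.trans_le (h2.trans h3)) (lt_irrefl _)
  refine Measure.ext fun B hB => ?_
  have h1 := key B hB
  have h2 := key Bᶜ hB.compl
  have hu1 : Measure.map S m B + Measure.map S m Bᶜ = 1 := by
    rw [measure_add_measure_compl hB, measure_univ]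
  have hu2 : m B + m Bᶜ = 1 := by
    rw [measure_add_measure_compl hB, measure_univ]
  have : m B + m Bᶜ ≤ Measure.map S m B + m Bᶜ := by
    rw [hu2, ← hu1]
    exact add_le_add le_rfl h2
  have h4 : m B ≤ Measure.map S m B :=
    (ENNReal.add_le_add_iff_right (measure_ne_top m Bᶜ)).mp this
  exact le_antisymm h1 h4

end MeasSec

section Unique

variable {Y : Type*} [MetricSpace Y] [CompactSpace Y]

lemma abs_avg_le_avg_abs (a : ℕ → ℝ) (n : ℕ) : |avg a n| ≤ avg (fun k => |a k|) n := by
  rw [avg, avg, abs_mul, abs_of_nonneg (show (0:ℝ) ≤ 1 / H n by have := H_nonneg n; positivity)]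
  apply mul_le_mul_of_nonneg_left _ (by have := H_nonneg n; positivity)
  refine (Finset.abs_sum_le_sum_abs _ _).trans ?_
  apply Finset.sum_le_sum
  intro k _
  rw [abs_mul, abs_of_nonneg (show (0:ℝ) ≤ 1 / (k+1:ℝ) by positivity)]

lemma avg_iterate_shift_bound {M : ℝ} (hM : 0 ≤ M) (m n : ℕ) :
    ∀ a : ℕ → ℝ, (∀ k, |a k| ≤ M) →
      |avg (fun k => a (k + m)) n - avg a n| ≤ 3 * M * m / H n := by
  induction m with
  | zero => intro a ha; simp [avg]
  | succ m ih =>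
    intro a ha
    have h1 : |avg (fun k => a (k + 1)) n - avg a n| ≤ 3 * M / H n :=
      avg_shift_bound hM ha n
    have h2 := ih (fun j => a (j + 1)) (fun k => ha (k + 1))
    have h2' : |avg (fun k => a (k + (m + 1))) n - avg (fun k => a (k + 1)) n|
        ≤ 3 * M * m / H n := h2
    have hHnn := H_nonneg n
    calc |avg (fun k => a (k + (m+1))) n - avg a n|
        ≤ |avg (fun k => a (k + (m+1))) n - avg (fun k => a (k + 1)) n|
          + |avg (fun k => a (k + 1)) n - avg a n| := abs_sub_le _ _ _
      _ ≤ 3 * M * m / H n + 3 * M / H n := add_le_add h2' h1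
      _ = 3 * M * ((m : ℝ) + 1) / H n := by ring
      _ = 3 * M * ((m + 1 : ℕ) : ℝ) / H n := by norm_cast

/-- Pointwise convergence of the difference of logarithmic Birkhoff averages. -/
lemma avg_diff_tendsto_zero (S : Y → Y) (x₀ : Y)
    (hdense : ∀ (y : Y) (ε : ℝ), 0 < ε → ∃ m, dist y (S^[m] x₀) < ε)
    (hlmeY : ∀ ε > (0:ℝ), ∃ δ > (0:ℝ), ∀ y z : Y, dist y z < δ →
      Filter.limsup (fun n => avg (fun k => dist (S^[k] y) (S^[k] z)) n) atTop < ε)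
    (g : C(Y, ℝ)) (y : Y) :
    Tendsto (fun n => avg (fun k => g (S^[k] y)) n - uSeq S x₀ g n) atTop (𝓝 0) := by
  rw [NormedAddCommGroup.tendsto_nhds_zero]
  intro ε hε
  have hb : ∀ (z : Y) (k : ℕ), |g (S^[k] z)| ≤ ‖g‖ := fun z k => by
    simpa [Real.norm_eq_abs] using g.norm_coe_le_norm (S^[k] z)
  -- uniform continuity
  have hgu : UniformContinuous g := CompactSpace.uniformContinuous_of_continuous g.continuous
  obtain ⟨η, hη, huc⟩ := Metric.uniformContinuous_iff.mp hgu (ε / 4) (by positivity)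
  obtain ⟨K, hK0, hpt⟩ : ∃ K : ℝ, 0 < K ∧ ∀ a b : Y, |g a - g b| ≤ ε / 4 + K * dist a b := by
    refine ⟨2 * ‖g‖ / η + 1, by positivity, fun a b => ?_⟩
    by_cases hd : dist a b < η
    · have h1 := huc hd
      rw [Real.dist_eq] at h1
      have h2 : 0 ≤ (2 * ‖g‖ / η + 1) * dist a b :=
        mul_nonneg (by positivity) dist_nonneg
      linarith
    · push_neg at hd
      have h1 : |g a - g b| ≤ 2 * ‖g‖ := by
        have ha := g.norm_coe_le_norm a; have hbb := g.norm_coe_le_norm b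
        rw [Real.norm_eq_abs] at ha hbb
        calc |g a - g b| ≤ |g a| + |g b| := abs_sub _ _
          _ ≤ 2 * ‖g‖ := by linarith
      have h2 : 2 * ‖g‖ ≤ (2 * ‖g‖ / η) * dist a b := by
        rw [div_mul_eq_mul_div, le_div_iff₀ hη]
        have h3 : 0 ≤ 2 * ‖g‖ := by positivity
        nlinarith
      have h4 : (2 * ‖g‖ / η) * dist a b ≤ (2 * ‖g‖ / η + 1) * dist a b := by
        apply mul_le_mul_of_nonneg_right _ dist_nonneg
        linarith
      have h5 : 0 ≤ ε / 4 := by positivity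
      linarith
  have hε₂ : 0 < ε / (4 * K) := by positivity
  obtain ⟨δ, hδ, hδprop⟩ := hlmeY (ε / (4 * K)) hε₂
  obtain ⟨m, hm⟩ := hdense y δ hδ
  set z : Y := S^[m] x₀ with hzdef
  set D : ℕ → ℝ := fun n => avg (fun k => dist (S^[k] y) (S^[k] z)) n with hDdef
  have hlim : Filter.limsup D atTop < ε / (4 * K) := hδprop y z hm
  have hDb : Filter.IsBoundedUnder (· ≤ ·) atTop D := by
    refine Filter.isBoundedUnder_of ⟨Metric.diam (Set.univ : Set Y), fun n => ?_⟩
    exact avg_le_of_le (M := Metric.diam (Set.univ : Set Y)) Metric.diam_nonneg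
      (fun k => Metric.dist_le_diam_of_mem isCompact_univ.isBounded trivial trivial) n
  have hev1 : ∀ᶠ n in atTop, D n < ε / (4 * K) := eventually_lt_of_limsup_lt hlim hDb
  have hev2 : ∀ᶠ n in atTop, 3 * ‖g‖ * m / H n < ε / 4 := by
    have h0 : Tendsto (fun n => 3 * ‖g‖ * m / H n) atTop (𝓝 0) :=
      tendsto_const_nhds.div_atTop H_tendsto
    exact h0.eventually_lt_const (by positivity)
  filter_upwards [hev1, hev2] with n h1 h2
  rw [Real.norm_eq_abs]
  have hA : |avg (fun k => g (S^[k] y)) n - avg (fun k => g (S^[k] z)) n|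
      ≤ ε / 4 + K * D n := by
    rw [avg_sub]
    refine (abs_avg_le_avg_abs _ n).trans ?_
    have hmaj : ∀ k, |g (S^[k] y) - g (S^[k] z)| ≤ ε / 4 + K * dist (S^[k] y) (S^[k] z) :=
      fun k => hpt _ _
    have h3 : avg (fun k => |g (S^[k] y) - g (S^[k] z)|) n
        ≤ ε / 4 + avg (fun k => K * dist (S^[k] y) (S^[k] z)) n :=
      avg_le_add_const (by positivity) hmaj
        (fun k => mul_nonneg hK0.le dist_nonneg) n
    have h4 : avg (fun k => K * dist (S^[k] y) (S^[k] z)) n = K * D n := avg_smul K _ n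
    rw [h4] at h3
    exact h3
  have hB : |avg (fun k => g (S^[k] z)) n - uSeq S x₀ g n| ≤ 3 * ‖g‖ * m / H n := by
    have h5 : (fun k => g (S^[k] z)) = fun k => g (S^[k + m] x₀) := by
      funext k
      rw [hzdef, ← Function.iterate_add_apply]
    rw [uSeq, h5]
    exact avg_iterate_shift_bound (norm_nonneg g) m n _ (fun k => hb x₀ k)
  have hKD : K * D n ≤ ε / 4 := by
    have h6 : K * D n ≤ K * (ε / (4 * K)) := mul_le_mul_of_nonneg_left h1.le hK0.le
    have h7 : K * (ε / (4 * K)) = ε / 4 := by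
      field_simp
    linarith
  calc |avg (fun k => g (S^[k] y)) n - uSeq S x₀ g n|
      ≤ |avg (fun k => g (S^[k] y)) n - avg (fun k => g (S^[k] z)) n|
        + |avg (fun k => g (S^[k] z)) n - uSeq S x₀ g n| := abs_sub_le _ _ _
    _ ≤ (ε / 4 + K * D n) + 3 * ‖g‖ * m / H n := add_le_add hA hB
    _ < ε / 4 + ε / 4 + ε / 4 := by linarith
    _ < ε := by linarith

end Unique

section IntegralSec

variable {Y : Type*} [MetricSpace Y] [CompactSpace Y] [MeasurableSpace Y] [BorelSpace Y]

lemma cmap_integrable (ρ : Measure Y) [IsFiniteMeasure ρ] (g : C(Y, ℝ)) :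
    Integrable (fun y => g y) ρ :=
  ⟨g.continuous.aestronglyMeasurable,
    HasFiniteIntegral.of_bounded (C := ‖g‖)
      (Filter.Eventually.of_forall fun y => g.norm_coe_le_norm y)⟩

lemma continuous_avg_fun {S : Y → Y} (hS : Continuous S) (g : C(Y, ℝ)) (n : ℕ) :
    Continuous (fun y => avg (fun k => g (S^[k] y)) n) := by
  simp only [avg]
  exact continuous_const.mul (continuous_finset_sum _ fun k _ =>
    continuous_const.mul (g.continuous.comp (hS.iterate k)))

lemma abs_avg_fun_le {S : Y → Y} (g : C(Y, ℝ)) (n : ℕ) (y : Y) :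
    |avg (fun k => g (S^[k] y)) n| ≤ ‖g‖ :=
  abs_avg_le_of_abs_le (norm_nonneg g)
    (fun k => by simpa [Real.norm_eq_abs] using g.norm_coe_le_norm (S^[k] y)) n

lemma map_iterate {S : Y → Y} (hSm : Measurable S) {ν : Measure Y}
    (hinv : Measure.map S ν = ν) (k : ℕ) : Measure.map (S^[k]) ν = ν := by
  induction k with
  | zero => simp [Measure.map_id]
  | succ k ih =>
    rw [Function.iterate_succ]
    rw [← Measure.map_map (hSm.iterate k) hSm, hinv, ih]

lemma integral_avg_eq {S : Y → Y} (hS : Continuous S) {ν : Measure Y}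
    [IsProbabilityMeasure ν] (hinv : Measure.map S ν = ν) (g : C(Y, ℝ)) {n : ℕ}
    (hn : 1 ≤ n) :
    ∫ y, avg (fun k => g (S^[k] y)) n ∂ν = ∫ y, g y ∂ν := by
  have hSm : Measurable S := hS.measurable
  have hintk : ∀ k : ℕ, Integrable (fun y => g (S^[k] y)) ν := by
    intro k
    exact cmap_integrable ν (g.comp ⟨S^[k], hS.iterate k⟩)
  have hcompk : ∀ k : ℕ, ∫ y, g (S^[k] y) ∂ν = ∫ y, g y ∂ν := by
    intro k
    conv_rhs => rw [← map_iterate hSm hinv k]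
    rw [integral_map (hSm.iterate k).aemeasurable g.continuous.aestronglyMeasurable]
  simp only [avg]
  rw [integral_const_mul]
  rw [integral_finset_sum _ (fun k _ => (hintk k).const_mul _)]
  have : ∀ k ∈ Finset.range n, ∫ y, (1 / (k + 1 : ℝ)) * g (S^[k] y) ∂ν
      = (1 / (k + 1 : ℝ)) * ∫ y, g y ∂ν := by
    intro k _
    rw [integral_const_mul, hcompk k]
  rw [Finset.sum_congr rfl this, ← Finset.sum_mul, sum_w]
  have hH := H_pos hn
  field_simp

lemma tendsto_uSeq_integral (S : Y → Y) (hS : Continuous S) (x₀ : Y)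
    (hdense : ∀ (y : Y) (ε : ℝ), 0 < ε → ∃ m, dist y (S^[m] x₀) < ε)
    (hlmeY : ∀ ε > (0:ℝ), ∃ δ > (0:ℝ), ∀ y z : Y, dist y z < δ →
      Filter.limsup (fun n => avg (fun k => dist (S^[k] y) (S^[k] z)) n) atTop < ε)
    (ν : Measure Y) [IsProbabilityMeasure ν] (hinv : Measure.map S ν = ν)
    (g : C(Y, ℝ)) :
    Tendsto (uSeq S x₀ g) atTop (𝓝 (∫ y, g y ∂ν)) := by
  have hintavg : ∀ n, Integrable (fun y => avg (fun k => g (S^[k] y)) n) ν := by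
    intro n
    refine ⟨(continuous_avg_fun hS g n).aestronglyMeasurable,
      HasFiniteIntegral.of_bounded (C := ‖g‖) (Filter.Eventually.of_forall fun y => ?_)⟩
    rw [Real.norm_eq_abs]
    exact abs_avg_fun_le g n y
  have hDCT : Tendsto
      (fun n => ∫ y, (avg (fun k => g (S^[k] y)) n - uSeq S x₀ g n) ∂ν) atTop
      (𝓝 (∫ _, (0:ℝ) ∂ν)) := by
    apply tendsto_integral_of_dominated_convergence (bound := fun _ => 2 * ‖g‖)
    · intro n
      exact ((continuous_avg_fun hS g n).sub continuous_const).aestronglyMeasurable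
    · exact integrable_const _
    · intro n
      refine Filter.Eventually.of_forall fun y => ?_
      rw [Real.norm_eq_abs]
      have h1 := abs_avg_fun_le (S := S) g n y
      have h2 := abs_uSeq_le S x₀ g n
      calc |avg (fun k => g (S^[k] y)) n - uSeq S x₀ g n|
          ≤ |avg (fun k => g (S^[k] y)) n| + |uSeq S x₀ g n| := abs_sub _ _
        _ ≤ 2 * ‖g‖ := by linarith
    · exact Filter.Eventually.of_forall fun y =>
        avg_diff_tendsto_zero S x₀ hdense hlmeY g y
  rw [integral_zero] at hDCT
  have hIeq : ∀ᶠ n in atTop,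
      ∫ y, (avg (fun k => g (S^[k] y)) n - uSeq S x₀ g n) ∂ν
        = ∫ y, g y ∂ν - uSeq S x₀ g n := by
    filter_upwards [eventually_ge_atTop 1] with n hn
    rw [integral_sub (hintavg n) (integrable_const _), integral_const, probReal_univ,
      integral_avg_eq hS hinv g hn]
    simp
  have hfin : Tendsto (fun n => ∫ y, g y ∂ν
      - ∫ y, (avg (fun k => g (S^[k] y)) n - uSeq S x₀ g n) ∂ν) atTop
      (𝓝 (∫ y, g y ∂ν - 0)) := tendsto_const_nhds.sub hDCT
  rw [sub_zero] at hfin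
  apply hfin.congr'
  filter_upwards [hIeq] with n hn
  rw [hn]
  ring

/-- Main abstract result: existence and uniqueness of the invariant probability measure. -/
theorem exists_unique_invariant (S : Y → Y) (hS : Continuous S) (x₀ : Y)
    (hdense : ∀ (y : Y) (ε : ℝ), 0 < ε → ∃ m, dist y (S^[m] x₀) < ε)
    (hlmeY : ∀ ε > (0:ℝ), ∃ δ > (0:ℝ), ∀ y z : Y, dist y z < δ →
      Filter.limsup (fun n => avg (fun k => dist (S^[k] y) (S^[k] z)) n) atTop < ε) :
    ∃ μ : Measure Y, IsProbabilityMeasure μ ∧ Measure.map S μ = μ ∧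
      ∀ ν : Measure Y, IsProbabilityMeasure ν → Measure.map S ν = ν → ν = μ := by
  have h𝒰 : ((Ultrafilter.of (atTop : Filter ℕ)) : Filter ℕ) ≤ atTop :=
    Ultrafilter.of_le _
  set m := (lmeContent (S := S) x₀ h𝒰).measure with hmdef
  haveI hmprob : IsProbabilityMeasure m := ⟨lmeContent_univ x₀ h𝒰⟩
  refine ⟨m, hmprob, lmeMeasure_map x₀ h𝒰 hS, ?_⟩
  intro ν hν hmap
  haveI := hν
  have hint : ∀ g : C(Y, ℝ), ∫ y, g y ∂ν = ∫ y, g y ∂m := by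
    intro g
    exact tendsto_nhds_unique
      (tendsto_uSeq_integral S hS x₀ hdense hlmeY ν hmap g)
      (tendsto_uSeq_integral S hS x₀ hdense hlmeY m (lmeMeasure_map x₀ h𝒰 hS) g)
  apply MeasureTheory.ext_of_forall_lintegral_eq_of_IsFiniteMeasure
  intro f
  set g : C(Y, ℝ) := ⟨fun y => (f y : ℝ), NNReal.continuous_coe.comp f.continuous⟩ with hgdef
  have h1 : ∀ (ρ : Measure Y), IsProbabilityMeasure ρ →
      ∫⁻ y, (f y : ENNReal) ∂ρ = ENNReal.ofReal (∫ y, g y ∂ρ) := by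
    intro ρ hρ
    rw [MeasureTheory.ofReal_integral_eq_lintegral_ofReal (cmap_integrable ρ g)
      (Filter.Eventually.of_forall fun y => (f y).coe_nonneg)]
    apply lintegral_congr
    intro y
    exact (ENNReal.ofReal_coe_nnreal).symm
  rw [h1 ν hν, h1 m hmprob, hint g]

end IntegralSec

end LMEProof

/-- If `(X,T)` is logarithmically mean equicontinuous, then for every `x ∈ X` the subsystem
`(cl(orb(x,T)), T)` is uniquely ergodic: it carries exactly one invariant Borel probability
measure. -/
theorem orbitClosure_uniquelyErgodic_of_logMeanEquicontinuous
    {X : Type*} [MetricSpace X] [CompactSpace X] [Nonempty X]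
    [MeasurableSpace X] [BorelSpace X]
    (T : X → X) (hT : Continuous T) (hlme : LogMeanEquicontinuous T) (x : X) :
    ∃ μ : ProbabilityMeasure (orbitClosure T x),
      {ν : ProbabilityMeasure (orbitClosure T x) |
        ∀ B : Set (orbitClosure T x), MeasurableSet B →
          ν (Set.MapsTo.restrict T _ _ (orbitClosure_mapsTo hT x) ⁻¹' B) = ν B} = {μ} := by
  classical
  haveI hYc : CompactSpace (orbitClosure T x) :=
    isCompact_iff_compactSpace.mp (isClosed_closure.isCompact)
  set S : orbitClosure T x → orbitClosure T x :=
    Set.MapsTo.restrict T _ _ (orbitClosure_mapsTo hT x) with hSdef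
  have hS : Continuous S := Continuous.restrict (orbitClosure_mapsTo hT x) hT
  have hx₀mem : x ∈ orbitClosure T x := subset_closure ⟨0, rfl⟩
  set x₀ : orbitClosure T x := ⟨x, hx₀mem⟩ with hx₀def
  have hcoe : ∀ (k : ℕ) (y : orbitClosure T x),
      ((S^[k] y : orbitClosure T x) : X) = T^[k] (y : X) := by
    intro k
    induction k with
    | zero => intro y; rfl
    | succ k ih =>
      intro y
      rw [Function.iterate_succ_apply', Function.iterate_succ_apply', ← ih y]
      exact Set.MapsTo.val_restrict_apply _ _
  have hdense : ∀ (y : orbitClosure T x) (ε : ℝ), 0 < ε → ∃ m, dist y (S^[m] x₀) < ε := by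
    intro y ε hε
    have hy : (y : X) ∈ closure (Set.range fun n : ℕ => T^[n] x) := y.2
    obtain ⟨b, hbmem, hb⟩ := Metric.mem_closure_iff.mp hy ε hε
    obtain ⟨m, rfl⟩ := hbmem
    refine ⟨m, ?_⟩
    rw [Subtype.dist_eq, hcoe m x₀]
    exact hb
  have hlmeY : ∀ ε > (0:ℝ), ∃ δ > (0:ℝ), ∀ y z : orbitClosure T x, dist y z < δ →
      Filter.limsup (fun n => LMEProof.avg (fun k => dist (S^[k] y) (S^[k] z)) n)
        atTop < ε := by
    intro ε hε
    obtain ⟨δ, hδ, hprop⟩ := hlme ε hε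
    refine ⟨δ, hδ, ?_⟩
    intro y z hyz
    have hdist : dist (y : X) (z : X) < δ := by rwa [← Subtype.dist_eq]
    have heq : (fun n => LMEProof.avg (fun k => dist (S^[k] y) (S^[k] z)) n)
        = (fun n : ℕ => (1 / H n) * ∑ k ∈ Finset.range n,
            (1 / (k + 1 : ℝ)) * dist (T^[k] (y : X)) (T^[k] (z : X))) := by
      funext n
      rw [LMEProof.avg]
      congr 1
      refine Finset.sum_congr rfl fun k _ => ?_
      rw [Subtype.dist_eq, hcoe k y, hcoe k z]
    rw [heq]
    exact hprop _ _ hdist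
  obtain ⟨m, hmprob, hmmap, huniq⟩ :=
    LMEProof.exists_unique_invariant S hS x₀ hdense hlmeY
  have hiff : ∀ ν : ProbabilityMeasure (orbitClosure T x),
      (∀ B : Set (orbitClosure T x), MeasurableSet B → ν (S ⁻¹' B) = ν B)
        ↔ Measure.map S ν.toMeasure = ν.toMeasure := by
    intro ν
    constructor
    · intro h
      refine Measure.ext fun B hB => ?_
      rw [Measure.map_apply hS.measurable hB]
      have h2 := h B hB
      have h3 : (ν (S ⁻¹' B) : ENNReal) = (ν B : ENNReal) := by exact_mod_cast h2
      rwa [ProbabilityMeasure.ennreal_coeFn_eq_coeFn_toMeasure,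
        ProbabilityMeasure.ennreal_coeFn_eq_coeFn_toMeasure] at h3
    · intro h B hB
      have h2 : ν.toMeasure (S ⁻¹' B) = ν.toMeasure B := by
        rw [← Measure.map_apply hS.measurable hB, h]
      have h3 : (ν (S ⁻¹' B) : ENNReal) = (ν B : ENNReal) := by
        rw [ProbabilityMeasure.ennreal_coeFn_eq_coeFn_toMeasure,
          ProbabilityMeasure.ennreal_coeFn_eq_coeFn_toMeasure, h2]
      exact_mod_cast h3
  refine ⟨⟨m, hmprob⟩, ?_⟩
  ext ν
  simp only [Set.mem_setOf_eq, Set.mem_singleton_iff]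
  constructor
  · intro hν
    have hmap := (hiff ν).mp hν
    have hνm : ν.toMeasure = m := huniq ν.toMeasure ν.2 hmap
    exact ProbabilityMeasure.toMeasure_injective (by simpa using hνm)
  · intro h
    subst h
    exact (hiff _).mpr (by simpa using hmmap)
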